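/- Let (P, m, A) be a poset system such that there exists no pair (a, x) ∈ A × P with a ≺_P x ≺_P m. Then for every prime power q, k(P, m, A; q) = k(P − m; q), where P − m is the induced subposet of P on P \ {m}. -/

import Mathlib

/-
Common framework: pattern posets, pattern algebras and pattern groups
(in the sense of Isaacs), the spaces `L_P(q)` realizing the dual of the pattern
algebra, the co-adjoint action, poset systems `(P, m, A)` and their orbit counts
`k(P, m, A; q)`, and combinatorial operations on pattern posets, following
"On Higman's conjecture" by Pak and Soffer.
-/

open Matrix

/-- A pattern poset on `{0,…,n-1}`: a strict partial order on `Fin n` that has the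
standard order of the integers as a linear extension. -/
structure PatternPoset (n : ℕ) where
  lt : Fin n → Fin n → Prop
  lt_trans : ∀ {i j k : Fin n}, lt i j → lt j k → lt i k
  lt_le : ∀ {i j : Fin n}, lt i j → (i : ℕ) < (j : ℕ)

namespace PatternPoset

variable {n : ℕ}

theorem lt_irrefl (P : PatternPoset n) (i : Fin n) : ¬ P.lt i i :=
  fun h => Nat.lt_irrefl _ (P.lt_le h)

theorem ne_of_lt (P : PatternPoset n) {i j : Fin n} (h : P.lt i j) : i ≠ j := by
  intro e; subst e; exact P.lt_irrefl i h

/-- The pattern algebra `𝒰_P(q)`, as a subspace of the `n × n` matrices: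
matrices supported on the cells `(i,j)` with `i ≺ j`. -/
def patternAlg (P : PatternPoset n) (F : Type*) [Field F] :
    Submodule F (Matrix (Fin n) (Fin n) F) where
  carrier := {X | ∀ i j : Fin n, ¬ P.lt i j → X i j = 0}
  add_mem' := by
    intro a b ha hb i j h
    simp [Matrix.add_apply, ha i j h, hb i j h]
  zero_mem' := by intro i j h; simp
  smul_mem' := by
    intro c a ha i j h
    simp [Matrix.smul_apply, ha i j h]

theorem mul_mem_patternAlg {P : PatternPoset n} {F : Type*} [Field F]
    {X Y : Matrix (Fin n) (Fin n) F} (hX : X ∈ P.patternAlg F) (hY : Y ∈ P.patternAlg F) :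
    X * Y ∈ P.patternAlg F := by
  intro i j h
  rw [Matrix.mul_apply]
  apply Finset.sum_eq_zero
  intro k _
  by_cases h1 : P.lt i k
  · by_cases h2 : P.lt k j
    · exact absurd (P.lt_trans h1 h2) h
    · rw [hY k j h2, mul_zero]
  · rw [hX i k h1, zero_mul]

theorem pow_apply_ne_zero {P : PatternPoset n} {F : Type*} [Field F]
    {X : Matrix (Fin n) (Fin n) F} (hX : X ∈ P.patternAlg F) :
    ∀ t (i j : Fin n), (X ^ t) i j ≠ 0 → (i : ℕ) + t ≤ (j : ℕ) := by
  intro t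
  induction t with
  | zero =>
    intro i j h
    rw [pow_zero] at h
    by_cases hij : i = j
    · subst hij; simp
    · exact absurd (Matrix.one_apply_ne hij) h
  | succ t ih =>
    intro i j h
    rw [pow_succ, Matrix.mul_apply] at h
    obtain ⟨k, -, hk⟩ := Finset.exists_ne_zero_of_sum_ne_zero h
    have h1 : (X ^ t) i k ≠ 0 := fun e => hk (by rw [e, zero_mul])
    have h2 : X k j ≠ 0 := fun e => hk (by rw [e, mul_zero])
    have h3 : P.lt k j := by by_contra hc; exact h2 (hX k j hc)
    have h4 := ih i k h1
    have h5 := P.lt_le h3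
    omega

theorem pow_card_eq_zero {P : PatternPoset n} {F : Type*} [Field F]
    {X : Matrix (Fin n) (Fin n) F} (hX : X ∈ P.patternAlg F) : X ^ n = 0 := by
  ext i j
  simp only [Matrix.zero_apply]
  by_contra h
  have h1 := pow_apply_ne_zero hX n i j h
  have h2 := j.isLt
  omega

theorem pow_succ_mem_patternAlg {P : PatternPoset n} {F : Type*} [Field F]
    {X : Matrix (Fin n) (Fin n) F} (hX : X ∈ P.patternAlg F) (t : ℕ) :
    X ^ (t + 1) ∈ P.patternAlg F := by
  induction t with
  | zero => simpa using hX
  | succ t ih => rw [pow_succ]; exact mul_mem_patternAlg ih hX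

theorem inv_sub_one_mem {P : PatternPoset n} {F : Type*} [Field F]
    {a : (Matrix (Fin n) (Fin n) F)ˣ}
    (ha : ((a : Matrix (Fin n) (Fin n) F) - 1) ∈ P.patternAlg F) :
    (((a⁻¹ : (Matrix (Fin n) (Fin n) F)ˣ) : Matrix (Fin n) (Fin n) F) - 1)
      ∈ P.patternAlg F := by
  rcases Nat.eq_zero_or_pos n with hn | hn
  · subst hn; intro i j _; exact i.elim0
  obtain ⟨m, rfl⟩ : ∃ m, n = m + 1 := ⟨n - 1, by omega⟩
  set X : Matrix (Fin (m + 1)) (Fin (m + 1)) F :=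
    (a : Matrix (Fin (m + 1)) (Fin (m + 1)) F) - 1 with hXdef
  have hXmem : -X ∈ P.patternAlg F := (P.patternAlg F).neg_mem ha
  have hXn : (-X) ^ (m + 1) = 0 := pow_card_eq_zero hXmem
  have key : (∑ t ∈ Finset.range (m + 1), (-X) ^ t) *
      (a : Matrix (Fin (m + 1)) (Fin (m + 1)) F) = 1 := by
    have hgeom := geom_sum_mul (-X) (m + 1)
    rw [hXn] at hgeom
    have ha' : (a : Matrix (Fin (m + 1)) (Fin (m + 1)) F) = -((-X) - 1) := by
      rw [hXdef]; abel
    rw [ha', mul_neg, hgeom]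
    simp
  have hinv : ((a⁻¹ : (Matrix (Fin (m + 1)) (Fin (m + 1)) F)ˣ) :
        Matrix (Fin (m + 1)) (Fin (m + 1)) F)
      = ∑ t ∈ Finset.range (m + 1), (-X) ^ t :=
    Units.inv_eq_of_mul_eq_one_left key
  rw [hinv]
  have hsplit : (∑ t ∈ Finset.range (m + 1), (-X) ^ t) - 1
      = ∑ t ∈ Finset.range m, (-X) ^ (t + 1) := by
    rw [Finset.sum_range_succ' (fun t => (-X) ^ t) m]
    simp
  rw [hsplit]
  exact Submodule.sum_mem _ (fun t _ => pow_succ_mem_patternAlg hXmem t)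

theorem entry_cases {P : PatternPoset n} {F : Type*} [Field F]
    {M : Matrix (Fin n) (Fin n) F} (hM : (M - 1) ∈ P.patternAlg F)
    {i k : Fin n} (h : M i k ≠ 0) : i = k ∨ P.lt i k := by
  by_contra hc
  push_neg at hc
  apply h
  have h1 := hM i k hc.2
  have h2 : (1 : Matrix (Fin n) (Fin n) F) i k = 0 := Matrix.one_apply_ne hc.1
  calc M i k = (M - 1) i k + (1 : Matrix (Fin n) (Fin n) F) i k := by
        simp [Matrix.sub_apply]
    _ = 0 := by rw [h1, h2, add_zero]

theorem conj_entry_zero {P : PatternPoset n} {F : Type*} [Field F]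
    {A B Y : Matrix (Fin n) (Fin n) F}
    (hA : (A - 1) ∈ P.patternAlg F) (hB : (B - 1) ∈ P.patternAlg F)
    (i j : Fin n)
    (hzero : ∀ k l : Fin n, (i = k ∨ P.lt i k) → (l = j ∨ P.lt l j) → Y k l = 0) :
    (A * Y * B) i j = 0 := by
  rw [Matrix.mul_apply]
  apply Finset.sum_eq_zero
  intro l _
  rw [Matrix.mul_apply, Finset.sum_mul]
  apply Finset.sum_eq_zero
  intro k _
  by_cases hAik : A i k = 0
  · rw [hAik, zero_mul, zero_mul]
  by_cases hBlj : B l j = 0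
  · rw [hBlj, mul_zero]
  rw [hzero k l (entry_cases hA hAik) (entry_cases hB hBlj), mul_zero, zero_mul]

/-- The pattern group `U_P(q) = {1 + X : X ∈ 𝒰_P(q)}`, as a subgroup of the units of the
matrix ring. -/
def patternGroup (P : PatternPoset n) (F : Type*) [Field F] :
    Subgroup (Matrix (Fin n) (Fin n) F)ˣ where
  carrier := {g | ((g : Matrix (Fin n) (Fin n) F) - 1) ∈ P.patternAlg F}
  one_mem' := by
    simp only [Set.mem_setOf_eq, Units.val_one, sub_self]
    exact (P.patternAlg F).zero_mem
  mul_mem' := by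
    intro a b ha hb
    simp only [Set.mem_setOf_eq, Units.val_mul] at *
    have h : (a : Matrix (Fin n) (Fin n) F) * b - 1 =
        ((a : Matrix (Fin n) (Fin n) F) - 1) * ((b : Matrix (Fin n) (Fin n) F) - 1)
          + (((a : Matrix (Fin n) (Fin n) F) - 1) + ((b : Matrix (Fin n) (Fin n) F) - 1)) := by
      noncomm_ring
    rw [h]
    exact (P.patternAlg F).add_mem (mul_mem_patternAlg ha hb) ((P.patternAlg F).add_mem ha hb)
  inv_mem' := fun ha => inv_sub_one_mem ha

/-- `k(P; q)`: the number of conjugacy classes of the pattern group `U_P(q)`. -/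
noncomputable def kOf (P : PatternPoset n) (F : Type*) [Field F] : ℕ :=
  Nat.card (ConjClasses (P.patternGroup F))

/-- The chain poset `C_n`, whose pattern group is the full unitriangular group `U_n(q)`. -/
def chainPoset (n : ℕ) : PatternPoset n where
  lt i j := (i : ℕ) < (j : ℕ)
  lt_trans := fun h1 h2 => Nat.lt_trans h1 h2
  lt_le := fun h => h

/-- The induced subposet `P − m`, obtained by deleting the element `m`. -/
def delete (P : PatternPoset (n + 1)) (m : Fin (n + 1)) : PatternPoset n where
  lt i j := P.lt (m.succAbove i) (m.succAbove j)
  lt_trans := fun h1 h2 => P.lt_trans h1 h2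
  lt_le := fun {i j} h => by
    have h2 : m.succAbove i < m.succAbove j := by
      rw [Fin.lt_def]; exact P.lt_le h
    exact Fin.lt_def.mp (Fin.succAbove_lt_succAbove_iff.mp h2)

/-- The dual poset `P*`, relabeled by `i ↦ n + 1 − i` so that the standard order is
again a linear extension. -/
def dual (P : PatternPoset n) : PatternPoset n where
  lt i j := P.lt j.rev i.rev
  lt_trans := fun h1 h2 => P.lt_trans h2 h1
  lt_le := fun {i j} h => by
    have h1 : j.rev < i.rev := by rw [Fin.lt_def]; exact P.lt_le h
    exact Fin.lt_def.mp (Fin.rev_lt_rev.mp h1)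

/-- The disjoint union `P ⨿ Q` of two pattern posets. -/
def disjUnion {m n : ℕ} (P : PatternPoset m) (Q : PatternPoset n) :
    PatternPoset (m + n) where
  lt x y :=
    match finSumFinEquiv.symm x, finSumFinEquiv.symm y with
    | Sum.inl a, Sum.inl b => P.lt a b
    | Sum.inr a, Sum.inr b => Q.lt a b
    | _, _ => False
  lt_trans := by
    intro i j k hij hjk
    rcases hi : finSumFinEquiv.symm i with a | a <;>
      rcases hj : finSumFinEquiv.symm j with b | b <;>
        rcases hk : finSumFinEquiv.symm k with c | c <;>
          simp only [hi, hj, hk] at hij hjk ⊢ <;>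
            first
              | exact P.lt_trans hij hjk
              | exact Q.lt_trans hij hjk
  lt_le := by
    intro i j h
    rcases hi : finSumFinEquiv.symm i with a | a <;>
      rcases hj : finSumFinEquiv.symm j with b | b <;>
        simp only [hi, hj] at h
    · have hi' : i = Fin.castAdd _ a := by
        rw [← finSumFinEquiv_apply_left, ← hi, Equiv.apply_symm_apply]
      have hj' : j = Fin.castAdd _ b := by
        rw [← finSumFinEquiv_apply_left, ← hj, Equiv.apply_symm_apply]
      rw [hi', hj']
      exact P.lt_le h
    · have hi' : i = Fin.natAdd _ a := by
        rw [← finSumFinEquiv_apply_right, ← hi, Equiv.apply_symm_apply]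
      have hj' : j = Fin.natAdd _ b := by
        rw [← finSumFinEquiv_apply_right, ← hj, Equiv.apply_symm_apply]
      rw [hi', hj']
      simpa using Q.lt_le h

/-- The subspace of matrices quotiented away in `L_P(q)`:
those vanishing on all cells `(i,j)` with `j ≺ i`. -/
def lowQuot (P : PatternPoset n) (F : Type*) [Field F] :
    Submodule F (Matrix (Fin n) (Fin n) F) where
  carrier := {X | ∀ i j : Fin n, P.lt j i → X i j = 0}
  add_mem' := by
    intro a b ha hb i j h
    simp [Matrix.add_apply, ha i j h, hb i j h]
  zero_mem' := by intro i j h; simp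
  smul_mem' := by
    intro c a ha i j h
    simp [Matrix.smul_apply, ha i j h]

/-- The space `L_P(q)`, realizing the dual `𝒰_P(q)*` as a quotient of the
space of all `n × n` matrices. -/
abbrev LSpace (P : PatternPoset n) (F : Type*) [Field F] :=
  Matrix (Fin n) (Fin n) F ⧸ P.lowQuot F

end PatternPoset

/-- Conjugation `X ↦ g X g⁻¹` by a unit, as a linear map on matrices. -/
def conjLin {n : ℕ} (F : Type*) [Field F] (g : (Matrix (Fin n) (Fin n) F)ˣ) :
    Matrix (Fin n) (Fin n) F →ₗ[F] Matrix (Fin n) (Fin n) F where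
  toFun X := (g : Matrix (Fin n) (Fin n) F) * X *
    ((g⁻¹ : (Matrix (Fin n) (Fin n) F)ˣ) : Matrix (Fin n) (Fin n) F)
  map_add' X Y := by rw [mul_add, add_mul]
  map_smul' c X := by rw [mul_smul_comm, smul_mul_assoc]; rfl

namespace PatternPoset

variable {n : ℕ}

/-- The co-adjoint action `K_g(X) = g X g⁻¹` of the pattern group on `L_P(q)`. -/
noncomputable def coadj (P : PatternPoset n) (F : Type*) [Field F]
    (g : P.patternGroup F) : P.LSpace F →ₗ[F] P.LSpace F :=
  Submodule.mapQ _ _ (conjLin F (g : (Matrix (Fin n) (Fin n) F)ˣ)) (by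
    intro Y hY
    simp only [Submodule.mem_comap]
    have hg : ((g : (Matrix (Fin n) (Fin n) F)ˣ) : Matrix (Fin n) (Fin n) F) - 1
        ∈ P.patternAlg F := g.2
    have hginv : (((g : (Matrix (Fin n) (Fin n) F)ˣ)⁻¹ : (Matrix (Fin n) (Fin n) F)ˣ) :
        Matrix (Fin n) (Fin n) F) - 1 ∈ P.patternAlg F := inv_sub_one_mem g.2
    intro i j hji
    apply conj_entry_zero hg hginv
    intro k l hik hlj
    apply hY k l
    rcases hik with rfl | hik <;> rcases hlj with rfl | hlj
    · exact hji
    · exact P.lt_trans hlj hji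
    · exact P.lt_trans hji hik
    · exact P.lt_trans (P.lt_trans hlj hji) hik)

/-- The poset `P^(m)`: the poset on the same ground set whose only relations
are `x ≺ m` for `x ≺_P m`. -/
def restrictTo (P : PatternPoset n) (m : Fin n) : PatternPoset n where
  lt x y := y = m ∧ P.lt x y
  lt_trans := fun h1 h2 => ⟨h2.1, P.lt_trans h1.2 h2.2⟩
  lt_le := fun h => P.lt_le h.2

/-- The canonical projection `π : L_P(q) → L_{P^(m)}(q)`. -/
noncomputable def projL (P : PatternPoset n) (m : Fin n) (F : Type*) [Field F] :
    P.LSpace F →ₗ[F] (P.restrictTo m).LSpace F :=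
  Submodule.mapQ _ _ LinearMap.id (by
    intro X hX
    simp only [Submodule.mem_comap, LinearMap.id_coe, id_eq]
    intro i j h
    exact hX i j h.2)

end PatternPoset

/-- The elementary transvection `E_{i,j}(α) = 1 + α e_{i,j}` as a unit of the matrix ring. -/
def transvectionUnit {n : ℕ} {F : Type*} [Field F] (i j : Fin n) (hij : i ≠ j) (α : F) :
    (Matrix (Fin n) (Fin n) F)ˣ where
  val := 1 + Matrix.single i j α
  inv := 1 + Matrix.single i j (-α)
  val_inv := by
    have h0 : Matrix.single i j α * Matrix.single i j (-α) = 0 :=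
      by simp [hij.symm]
    have h1 : Matrix.single i j α + Matrix.single i j (-α) = 0 := by
      rw [← Matrix.single_add]; simp
    rw [add_mul, mul_add, mul_add, one_mul, mul_one, h0]
    rw [add_zero, add_assoc, one_mul, add_comm (Matrix.single i j (-α)), h1, add_zero]
  inv_val := by
    have h0 : Matrix.single i j (-α) * Matrix.single i j α = 0 :=
      by simp [hij.symm]
    have h1 : Matrix.single i j (-α) + Matrix.single i j α = 0 := by
      rw [← Matrix.single_add]; simp
    rw [add_mul, mul_add, mul_add, one_mul, mul_one, h0]
    rw [add_zero, add_assoc, one_mul, add_comm (Matrix.single i j α), h1, add_zero]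

/-- A poset system `(P, m, A)`: a pattern poset `P`, a maximal element `m`,
and an anti-chain `A ⊆ lb(m)`. -/
structure PosetSystem (n : ℕ) where
  P : PatternPoset n
  m : Fin n
  m_max : ∀ x, ¬ P.lt m x
  A : Finset (Fin n)
  A_lb : ∀ a ∈ A, P.lt a m
  A_anti : ∀ a ∈ A, ∀ b ∈ A, ¬ P.lt a b

namespace PosetSystem

variable {n : ℕ}

/-- The element `1_A = Σ_{a ∈ A} e_{m,a}` of `L_{P^(m)}(q)`. -/
noncomputable def oneA (S : PosetSystem n) (F : Type*) [Field F] :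
    (S.P.restrictTo S.m).LSpace F :=
  Submodule.Quotient.mk (∑ a ∈ S.A, Matrix.single S.m a (1 : F))

/-- The action of `U_P(q)` on `L_{P^(m)}(q)` induced by the co-adjoint action. -/
noncomputable def coadjQ (S : PosetSystem n) (F : Type*) [Field F]
    (g : S.P.patternGroup F) :
    (S.P.restrictTo S.m).LSpace F →ₗ[F] (S.P.restrictTo S.m).LSpace F :=
  Submodule.mapQ _ _ (conjLin F (g : (Matrix (Fin n) (Fin n) F)ˣ)) (by
    intro Y hY
    simp only [Submodule.mem_comap]
    have hg : ((g : (Matrix (Fin n) (Fin n) F)ˣ) : Matrix (Fin n) (Fin n) F) - 1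
        ∈ S.P.patternAlg F := g.2
    have hginv : (((g : (Matrix (Fin n) (Fin n) F)ˣ)⁻¹ : (Matrix (Fin n) (Fin n) F)ˣ) :
        Matrix (Fin n) (Fin n) F) - 1 ∈ S.P.patternAlg F :=
      PatternPoset.inv_sub_one_mem g.2
    intro i j hji
    obtain ⟨him, hjilt⟩ := hji
    apply PatternPoset.conj_entry_zero hg hginv
    intro k l hik hlj
    have hk : k = S.m := by
      rcases hik with rfl | hik
      · exact him
      · rw [him] at hik; exact absurd hik (S.m_max k)
    have hlm : S.P.lt l S.m := by
      rcases hlj with rfl | hlj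
      · rw [← him]; exact hjilt
      · rw [him] at hjilt; exact S.P.lt_trans hlj hjilt
    subst hk
    exact hY S.m l ⟨rfl, hlm⟩)

/-- The stabilizer of `1_A` in `U_P(q)` for the induced action on `L_{P^(m)}(q)`. -/
noncomputable def stab (S : PosetSystem n) (F : Type*) [Field F] :
    Set (S.P.patternGroup F) :=
  {g | S.coadjQ F g (S.oneA F) = S.oneA F}

/-- The fiber `π⁻¹(1_A) ⊆ L_P(q)`. -/
noncomputable def fiber (S : PosetSystem n) (F : Type*) [Field F] :
    Set (S.P.LSpace F) :=
  {X | S.P.projL S.m F X = S.oneA F}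

/-- `k(P, m, A; q)`: the number of orbits of `Stab_{U_P(q)}(1_A)` acting on the fiber
`π⁻¹(1_A)` under the co-adjoint action, counted as the number of distinct orbit sets. -/
noncomputable def systemK (S : PosetSystem n) (F : Type*) [Field F] : ℕ :=
  Nat.card {O : Set (S.P.LSpace F) // ∃ X ∈ S.fiber F,
    O = {Y | ∃ g ∈ S.stab F, S.P.coadj F g X = Y}}

/-- The poset `D(S)`: delete from `P` every relation `(a, x)` with `a ∈ A`,
`a ≺ x ≺ m`, and `A ∩ lb(x) = {a}`. -/
def D (S : PosetSystem n) : PatternPoset n where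
  lt x y := S.P.lt x y ∧
    ¬ (x ∈ S.A ∧ S.P.lt y S.m ∧ ∀ b ∈ S.A, S.P.lt b y → b = x)
  lt_trans := by
    rintro i j k ⟨hij, hi⟩ ⟨hjk, -⟩
    refine ⟨S.P.lt_trans hij hjk, ?_⟩
    rintro ⟨hiA, hkm, huniq⟩
    exact hi ⟨hiA, S.P.lt_trans hjk hkm, fun b hb hbj => huniq b hb (S.P.lt_trans hbj hjk)⟩
  lt_le := fun h => S.P.lt_le h.1

/-- `D(S)` together with the same `m` and `A`, as a poset system. -/
def DSys (S : PosetSystem n) : PosetSystem n where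
  P := S.D
  m := S.m
  m_max := fun x h => S.m_max x h.1
  A := S.A
  A_lb := fun a ha => ⟨S.A_lb a ha, fun h => S.P.lt_irrefl S.m h.2.1⟩
  A_anti := fun a ha b hb h => S.A_anti a ha b hb h.1

end PosetSystem

/-! ### Auxiliary development for Lemma 4.4 -/

namespace PakAux

open PatternPoset Matrix

section Generic

variable {d : ℕ} {F : Type} [Field F]

/-- `1 + x` is a unit when `x` lies in the pattern algebra. -/
noncomputable def algUnit (Q : PatternPoset d) {x : Matrix (Fin d) (Fin d) F}
    (hx : x ∈ Q.patternAlg F) : (Matrix (Fin d) (Fin d) F)ˣ where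
  val := 1 + x
  inv := ∑ t ∈ Finset.range d, (-x) ^ t
  val_inv := by
    have hXn : (-x) ^ d = 0 := PatternPoset.pow_card_eq_zero ((Q.patternAlg F).neg_mem hx)
    have hgeom := mul_geom_sum (-x) d
    rw [hXn] at hgeom
    calc (1 + x) * ∑ t ∈ Finset.range d, (-x) ^ t
        = -(((-x) - 1) * ∑ t ∈ Finset.range d, (-x) ^ t) := by noncomm_ring
      _ = 1 := by rw [hgeom]; noncomm_ring
  inv_val := by
    have hXn : (-x) ^ d = 0 := PatternPoset.pow_card_eq_zero ((Q.patternAlg F).neg_mem hx)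
    have hgeom := geom_sum_mul (-x) d
    rw [hXn] at hgeom
    calc (∑ t ∈ Finset.range d, (-x) ^ t) * (1 + x)
        = -((∑ t ∈ Finset.range d, (-x) ^ t) * ((-x) - 1)) := by noncomm_ring
      _ = 1 := by rw [hgeom]; noncomm_ring

theorem algUnit_mem (Q : PatternPoset d) {x : Matrix (Fin d) (Fin d) F}
    (hx : x ∈ Q.patternAlg F) : algUnit Q hx ∈ Q.patternGroup F := by
  show ((algUnit Q hx : Matrix (Fin d) (Fin d) F) - 1) ∈ Q.patternAlg F
  show ((1 + x) - 1) ∈ Q.patternAlg F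
  simpa using hx

/-- The element of the pattern group with value `1 + x`. -/
noncomputable def unitOfAlg (Q : PatternPoset d) {x : Matrix (Fin d) (Fin d) F}
    (hx : x ∈ Q.patternAlg F) : Q.patternGroup F :=
  ⟨algUnit Q hx, algUnit_mem Q hx⟩

theorem unitOfAlg_val (Q : PatternPoset d) {x : Matrix (Fin d) (Fin d) F}
    (hx : x ∈ Q.patternAlg F) :
    ((unitOfAlg Q hx : (Matrix (Fin d) (Fin d) F)ˣ) : Matrix (Fin d) (Fin d) F) = 1 + x := rfl

/-- Entries of elements of pattern groups. -/
theorem unit_entry_eq_one {Q : PatternPoset d} {u : (Matrix (Fin d) (Fin d) F)ˣ}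
    (hu : ((u : Matrix (Fin d) (Fin d) F) - 1) ∈ Q.patternAlg F) {i j : Fin d}
    (hlt : ¬ Q.lt i j) : (u : Matrix (Fin d) (Fin d) F) i j = (1 : Matrix (Fin d) (Fin d) F) i j := by
  have h := hu i j hlt
  rw [Matrix.sub_apply, sub_eq_zero] at h
  exact h

theorem coadj_mk (Q : PatternPoset d) (g : Q.patternGroup F) (R : Matrix (Fin d) (Fin d) F) :
    Q.coadj F g (Submodule.Quotient.mk R) =
      Submodule.Quotient.mk
        (((g : (Matrix (Fin d) (Fin d) F)ˣ) : Matrix (Fin d) (Fin d) F) * R *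
          ((((g : (Matrix (Fin d) (Fin d) F)ˣ))⁻¹ : (Matrix (Fin d) (Fin d) F)ˣ) :
            Matrix (Fin d) (Fin d) F)) := by
  rw [PatternPoset.coadj, Submodule.mapQ_apply]
  rfl

theorem coadj_one (Q : PatternPoset d) (y : Q.LSpace F) : Q.coadj F 1 y = y := by
  obtain ⟨R, rfl⟩ := Submodule.Quotient.mk_surjective _ y
  rw [coadj_mk]
  simp

theorem coadj_mul (Q : PatternPoset d) (g h : Q.patternGroup F) (y : Q.LSpace F) :
    Q.coadj F (g * h) y = Q.coadj F g (Q.coadj F h y) := by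
  obtain ⟨R, rfl⟩ := Submodule.Quotient.mk_surjective _ y
  rw [coadj_mk, coadj_mk, coadj_mk]
  congr 1
  simp [mul_assoc]

theorem conj_mem_alg (Q : PatternPoset d) {u : (Matrix (Fin d) (Fin d) F)ˣ}
    (hu : ((u : Matrix (Fin d) (Fin d) F) - 1) ∈ Q.patternAlg F) {x : Matrix (Fin d) (Fin d) F}
    (hx : x ∈ Q.patternAlg F) :
    (u : Matrix (Fin d) (Fin d) F) * x * ((u⁻¹ : (Matrix (Fin d) (Fin d) F)ˣ) :
      Matrix (Fin d) (Fin d) F) ∈ Q.patternAlg F := by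
  intro i j hij
  refine PatternPoset.conj_entry_zero hu (PatternPoset.inv_sub_one_mem hu) i j ?_
  intro k l hik hlj
  by_cases hkl : Q.lt k l
  · exfalso
    apply hij
    rcases hik with rfl | hik <;> rcases hlj with rfl | hlj
    · exact hkl
    · exact Q.lt_trans hkl hlj
    · exact Q.lt_trans hik hkl
    · exact Q.lt_trans (Q.lt_trans hik hkl) hlj
  · exact hx k l hkl

/-- Conjugation by a pattern-group element, as a linear endomorphism of the pattern algebra. -/
noncomputable def conjAlg (Q : PatternPoset d) (F : Type) [Field F] (g : Q.patternGroup F) :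
    (Q.patternAlg F) →ₗ[F] (Q.patternAlg F) where
  toFun x := ⟨((g : (Matrix (Fin d) (Fin d) F)ˣ) : Matrix (Fin d) (Fin d) F) * x.val *
      ((((g : (Matrix (Fin d) (Fin d) F)ˣ))⁻¹ : (Matrix (Fin d) (Fin d) F)ˣ) :
        Matrix (Fin d) (Fin d) F), conj_mem_alg Q g.2 x.2⟩
  map_add' x y := by apply Subtype.ext; simp [mul_add, add_mul]
  map_smul' c x := by apply Subtype.ext; simp [Matrix.mul_smul, Matrix.smul_mul]

noncomputable instance algSMul (Q : PatternPoset d) (F : Type) [Field F] :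
    SMul (Q.patternGroup F) (Q.patternAlg F) :=
  ⟨fun g x => conjAlg Q F g x⟩

theorem algSMul_val (Q : PatternPoset d) (g : Q.patternGroup F) (x : Q.patternAlg F) :
    ((g • x : Q.patternAlg F) : Matrix (Fin d) (Fin d) F) =
      ((g : (Matrix (Fin d) (Fin d) F)ˣ) : Matrix (Fin d) (Fin d) F) * x.val *
        ((((g : (Matrix (Fin d) (Fin d) F)ˣ))⁻¹ : (Matrix (Fin d) (Fin d) F)ˣ) :
          Matrix (Fin d) (Fin d) F) := rfl

noncomputable instance algAction (Q : PatternPoset d) (F : Type) [Field F] :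
    MulAction (Q.patternGroup F) (Q.patternAlg F) where
  one_smul x := by
    apply Subtype.ext
    rw [algSMul_val]
    simp
  mul_smul g h x := by
    apply Subtype.ext
    rw [algSMul_val, algSMul_val, algSMul_val]
    simp [mul_assoc]

noncomputable instance coadjAction (Q : PatternPoset d) (F : Type) [Field F] :
    MulAction (Q.patternGroup F) (Q.LSpace F) where
  smul g y := Q.coadj F g y
  one_smul := coadj_one Q
  mul_smul := coadj_mul Q

theorem coadjAction_smul_def (Q : PatternPoset d) (g : Q.patternGroup F) (y : Q.LSpace F) :
    g • y = Q.coadj F g y := rfl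

/-- The bijection `g ↦ g - 1` between the pattern group and the pattern algebra. -/
noncomputable def grpAlgEquiv (Q : PatternPoset d) (F : Type) [Field F] :
    Q.patternGroup F ≃ Q.patternAlg F where
  toFun g := ⟨((g : (Matrix (Fin d) (Fin d) F)ˣ) : Matrix (Fin d) (Fin d) F) - 1, g.2⟩
  invFun x := unitOfAlg Q x.2
  left_inv g := by
    apply Subtype.ext; apply Units.ext
    show 1 + (((g : (Matrix (Fin d) (Fin d) F)ˣ) : Matrix (Fin d) (Fin d) F) - 1) = _
    abel
  right_inv x := by
    apply Subtype.ext
    show (1 + x.val) - 1 = x.val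
    abel

theorem smul_alg_iff (Q : PatternPoset d) (c : Q.patternGroup F) (x y : Q.patternAlg F) :
    c • x = y ↔ c * (grpAlgEquiv Q F).symm x * c⁻¹ = (grpAlgEquiv Q F).symm y := by
  rw [Subtype.ext_iff, algSMul_val]
  constructor
  · intro hv
    apply Subtype.ext; apply Units.ext
    show ((c : (Matrix (Fin d) (Fin d) F)ˣ) : Matrix (Fin d) (Fin d) F) * (1 + x.val) *
        ((((c : (Matrix (Fin d) (Fin d) F)ˣ))⁻¹ : (Matrix (Fin d) (Fin d) F)ˣ) :
          Matrix (Fin d) (Fin d) F) = 1 + y.val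
    rw [mul_add, add_mul, mul_one, (c : (Matrix (Fin d) (Fin d) F)ˣ).mul_inv, hv]
  · intro hg
    have hv := congrArg (fun (z : Q.patternGroup F) =>
      ((z : (Matrix (Fin d) (Fin d) F)ˣ) : Matrix (Fin d) (Fin d) F)) hg
    have hv' : ((c : (Matrix (Fin d) (Fin d) F)ˣ) : Matrix (Fin d) (Fin d) F) * (1 + x.val) *
        ((((c : (Matrix (Fin d) (Fin d) F)ˣ))⁻¹ : (Matrix (Fin d) (Fin d) F)ˣ) :
          Matrix (Fin d) (Fin d) F) = 1 + y.val := hv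
    rw [mul_add, add_mul, mul_one, (c : (Matrix (Fin d) (Fin d) F)ˣ).mul_inv] at hv'
    exact add_left_cancel hv'

theorem kOf_eq_card_orbits_alg (Q : PatternPoset d) (F : Type) [Field F] :
    Q.kOf F = Nat.card (Quotient (MulAction.orbitRel (Q.patternGroup F) (Q.patternAlg F))) := by
  apply Nat.card_congr
  refine Quotient.congr (grpAlgEquiv Q F) ?_
  intro a b
  show IsConj a b ↔
    (grpAlgEquiv Q F a) ∈ MulAction.orbit (Q.patternGroup F) (grpAlgEquiv Q F b)
  rw [isConj_iff, MulAction.mem_orbit_iff]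
  constructor
  · rintro ⟨c, hc⟩
    refine ⟨c⁻¹, (smul_alg_iff Q c⁻¹ _ _).mpr ?_⟩
    rw [Equiv.symm_apply_apply, Equiv.symm_apply_apply, ← hc]
    group
  · rintro ⟨c, hc⟩
    have := (smul_alg_iff Q c _ _).mp hc
    rw [Equiv.symm_apply_apply, Equiv.symm_apply_apply] at this
    refine ⟨c⁻¹, ?_⟩
    rw [← this]
    group

/-- The orbit space as the set of orbit sets. -/
noncomputable def orbitSetEquiv (G : Type*) (α : Type*) [Group G] [MulAction G α] :
    Quotient (MulAction.orbitRel G α) ≃ {O : Set α // ∃ x : α, O = MulAction.orbit G x} := by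
  refine Equiv.ofBijective
    (Quotient.lift (fun x => (⟨MulAction.orbit G x, x, rfl⟩ :
      {O : Set α // ∃ x : α, O = MulAction.orbit G x})) ?_) ⟨?_, ?_⟩
  · intro a b hab
    apply Subtype.ext
    show MulAction.orbit G a = MulAction.orbit G b
    exact MulAction.orbit_eq_iff.mpr hab
  · intro q1 q2
    refine Quotient.inductionOn₂ q1 q2 fun a b hq => ?_
    have hab : MulAction.orbit G a = MulAction.orbit G b := congrArg Subtype.val hq
    apply Quotient.sound
    show a ∈ MulAction.orbit G b
    rw [← hab]
    exact MulAction.mem_orbit_self a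
  · rintro ⟨O, x, rfl⟩
    exact ⟨Quotient.mk _ x, rfl⟩

end Generic

section Duality

open scoped Classical

variable {d : ℕ} {F : Type} [Field F]

/-- Truncation to the cells of the pattern algebra. -/
noncomputable def truncLin (Q : PatternPoset d) (F : Type) [Field F] :
    Matrix (Fin d) (Fin d) F →ₗ[F] Matrix (Fin d) (Fin d) F where
  toFun X := Matrix.of fun i j => if Q.lt i j then X i j else 0
  map_add' X Y := by
    ext i j
    by_cases h : Q.lt i j <;> simp [h]
  map_smul' c X := by
    ext i j
    by_cases h : Q.lt i j <;> simp [h]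

theorem truncLin_apply (Q : PatternPoset d) (X : Matrix (Fin d) (Fin d) F) (i j : Fin d) :
    truncLin Q F X i j = if Q.lt i j then X i j else 0 := rfl

theorem truncLin_mem (Q : PatternPoset d) (X : Matrix (Fin d) (Fin d) F) :
    truncLin Q F X ∈ Q.patternAlg F := by
  intro i j h
  simp [truncLin_apply, h]

theorem truncLin_of_mem (Q : PatternPoset d) {X : Matrix (Fin d) (Fin d) F}
    (hX : X ∈ Q.patternAlg F) : truncLin Q F X = X := by
  ext i j
  rw [truncLin_apply]
  by_cases h : Q.lt i j
  · simp [h]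
  · simp [h, hX i j h]

/-- Transposition as a linear map. -/
noncomputable def transLin (d : ℕ) (F : Type) [Field F] :
    Matrix (Fin d) (Fin d) F →ₗ[F] Matrix (Fin d) (Fin d) F where
  toFun X := Xᵀ
  map_add' X Y := by ext i j; simp
  map_smul' c X := by ext i j; simp

/-- The identification `L_Q(q) ≃ 𝒰_Q(q)` sending `[X]` to the truncation of `Xᵀ`. -/
noncomputable def epsEquiv (Q : PatternPoset d) (F : Type) [Field F] :
    Q.LSpace F ≃ₗ[F] Q.patternAlg F := by
  refine LinearEquiv.ofLinear
    ((Q.lowQuot F).liftQ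
      (LinearMap.codRestrict (Q.patternAlg F) ((truncLin Q F).comp (transLin d F))
        (fun X => truncLin_mem Q _)) ?_)
    (((Q.lowQuot F).mkQ).comp ((transLin d F).comp (Q.patternAlg F).subtype)) ?_ ?_
  · intro X hX
    rw [LinearMap.mem_ker]
    apply Subtype.ext
    show truncLin Q F (Xᵀ) = 0
    ext i j
    rw [truncLin_apply]
    by_cases h : Q.lt i j
    · simp [h, Matrix.transpose_apply, hX j i h]
    · simp [h]
  · apply LinearMap.ext
    intro x
    apply Subtype.ext
    show truncLin Q F ((x.val)ᵀᵀ) = x.val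
    rw [Matrix.transpose_transpose, truncLin_of_mem Q x.2]
  · apply LinearMap.ext
    intro y
    obtain ⟨X, rfl⟩ := Submodule.Quotient.mk_surjective _ y
    show Submodule.Quotient.mk ((truncLin Q F (Xᵀ))ᵀ) = Submodule.Quotient.mk X
    rw [Submodule.Quotient.eq]
    intro i j hji
    simp [truncLin_apply, Matrix.transpose_apply, hji]

theorem epsEquiv_mk (Q : PatternPoset d) (X : Matrix (Fin d) (Fin d) F) :
    ((epsEquiv Q F (Submodule.Quotient.mk X)) : Matrix (Fin d) (Fin d) F) =
      truncLin Q F (Xᵀ) := by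
  rw [epsEquiv, LinearEquiv.ofLinear_apply, Submodule.liftQ_apply]
  rfl

/-- The trace pairing. -/
noncomputable def pairB (X Y : Matrix (Fin d) (Fin d) F) : F := Matrix.trace (X * Yᵀ)

theorem pairB_eq_sum (X Y : Matrix (Fin d) (Fin d) F) :
    pairB X Y = ∑ i : Fin d, ∑ j : Fin d, X i j * Y i j := by
  simp [pairB, Matrix.trace, Matrix.diag, Matrix.mul_apply]

theorem pairB_trunc (Q : PatternPoset d) {X : Matrix (Fin d) (Fin d) F}
    (hX : X ∈ Q.patternAlg F) (Z : Matrix (Fin d) (Fin d) F) :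
    pairB X (truncLin Q F Z) = pairB X Z := by
  rw [pairB_eq_sum, pairB_eq_sum]
  refine Finset.sum_congr rfl fun i _ => Finset.sum_congr rfl fun j _ => ?_
  rw [truncLin_apply]
  by_cases h : Q.lt i j
  · simp [h]
  · simp [h, hX i j h]

theorem pairB_std (i j : Fin d) (Y : Matrix (Fin d) (Fin d) F) :
    pairB (single i j (1 : F)) Y = Y i j := by
  rw [pairB_eq_sum]
  have hterm : ∀ a b : Fin d, (single i j (1 : F)) a b * Y a b =
      if i = a ∧ j = b then Y a b else 0 := by
    intro a b
    show (if i = a ∧ j = b then (1 : F) else 0) * Y a b = _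
    by_cases hab : i = a ∧ j = b
    · simp [hab]
    · simp [hab]
  simp only [hterm]
  rw [Finset.sum_eq_single i]
  · rw [Finset.sum_eq_single j]
    · simp
    · intro b _ hb
      exact if_neg (fun hc => hb hc.2.symm)
    · intro hj; exact absurd (Finset.mem_univ j) hj
  · intro a _ ha
    exact Finset.sum_eq_zero fun b _ => if_neg (fun hc => ha hc.1.symm)
  · intro hi; exact absurd (Finset.mem_univ i) hi

theorem stdBasis_mem_alg (Q : PatternPoset d) {i j : Fin d} (hij : Q.lt i j) (c : F) :
    single i j c ∈ Q.patternAlg F := by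
  intro k l hkl
  show (if i = k ∧ j = l then c else 0) = 0
  rw [if_neg]
  rintro ⟨rfl, rfl⟩
  exact hkl hij

/-- The pairing as a map to the dual. -/
noncomputable def psiMap (Q : PatternPoset d) (F : Type) [Field F] :
    (Q.patternAlg F) →ₗ[F] Module.Dual F (Q.patternAlg F) where
  toFun Y :=
    { toFun := fun X => pairB X.val Y.val
      map_add' := fun X X' => by simp [pairB, add_mul]
      map_smul' := fun c X => by simp [pairB, Matrix.smul_mul] }
  map_add' Y Y' := by
    apply LinearMap.ext
    intro X
    simp [pairB, Matrix.transpose_add, mul_add]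
  map_smul' c Y := by
    apply LinearMap.ext
    intro X
    simp [pairB, Matrix.transpose_smul, Matrix.mul_smul]

theorem psiMap_apply (Q : PatternPoset d) (Y X : Q.patternAlg F) :
    psiMap Q F Y X = pairB X.val Y.val := rfl

theorem psiMap_injective (Q : PatternPoset d) : Function.Injective (psiMap Q F) := by
  rw [← LinearMap.ker_eq_bot, Submodule.eq_bot_iff]
  intro Y hY
  rw [LinearMap.mem_ker] at hY
  apply Subtype.ext
  ext i j
  show Y.val i j = (0 : Matrix (Fin d) (Fin d) F) i j
  rw [Matrix.zero_apply]
  by_cases h : Q.lt i j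
  · have := congrArg (fun φ => φ ⟨single i j (1 : F), stdBasis_mem_alg Q h 1⟩) hY
    simpa [psiMap_apply, pairB_std] using this
  · exact Y.2 i j h

theorem psiMap_bijective (Q : PatternPoset d) : Function.Bijective (psiMap Q F) := by
  refine ⟨psiMap_injective Q, ?_⟩
  rw [← LinearMap.injective_iff_surjective_of_finrank_eq_finrank
    (Subspace.dual_finrank_eq (V := Q.patternAlg F)).symm]
  exact psiMap_injective Q

theorem unit_conj_fix_iff {M : Type*} [Ring M] (u : Mˣ) (x : M) :
    ((u : M) * x * ((u⁻¹ : Mˣ) : M) = x) ↔ (((u⁻¹ : Mˣ) : M) * x * (u : M) = x) := by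
  constructor
  · intro h
    have h2 := congrArg (fun z => ((u⁻¹ : Mˣ) : M) * z * (u : M)) h
    simpa [mul_assoc, Units.inv_mul_cancel_left, Units.mul_inv_cancel_left] using h2.symm
  · intro h
    have h2 := congrArg (fun z => (u : M) * z * ((u⁻¹ : Mˣ) : M)) h
    simpa [mul_assoc, Units.mul_inv_cancel_left, Units.inv_mul_cancel_left] using h2.symm

theorem conjAlg_inv_val (Q : PatternPoset d) (g : Q.patternGroup F) (x : Q.patternAlg F) :
    ((conjAlg Q F g⁻¹ x : Q.patternAlg F) : Matrix (Fin d) (Fin d) F) =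
      ((((g : (Matrix (Fin d) (Fin d) F)ˣ))⁻¹ : (Matrix (Fin d) (Fin d) F)ˣ) :
        Matrix (Fin d) (Fin d) F) * x.val *
        ((g : (Matrix (Fin d) (Fin d) F)ˣ) : Matrix (Fin d) (Fin d) F) := by
  have h1 : ((g⁻¹ : Q.patternGroup F) : (Matrix (Fin d) (Fin d) F)ˣ) =
      ((g : (Matrix (Fin d) (Fin d) F)ˣ))⁻¹ := rfl
  show (((g⁻¹ : Q.patternGroup F) : (Matrix (Fin d) (Fin d) F)ˣ) : Matrix (Fin d) (Fin d) F) *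
      x.val * ((((g⁻¹ : Q.patternGroup F) : (Matrix (Fin d) (Fin d) F)ˣ))⁻¹ :
        (Matrix (Fin d) (Fin d) F)ˣ).val = _
  rw [h1, inv_inv]

/-- The main per-element fixed-point count equality between the co-adjoint action on `L_Q`
and the conjugation action on the pattern algebra. -/
theorem card_fixedBy_eq (Q : PatternPoset d) (F : Type) [Field F] [Fintype F]
    (g : Q.patternGroup F) :
    Nat.card (MulAction.fixedBy (Q.LSpace F) g) =
      Nat.card (MulAction.fixedBy (Q.patternAlg F) g) := by
  classical
  set C : Q.LSpace F →ₗ[F] Q.LSpace F := Q.coadj F g - LinearMap.id with hC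
  set A : (Q.patternAlg F) →ₗ[F] (Q.patternAlg F) := conjAlg Q F g⁻¹ - LinearMap.id with hA
  set ηE : Q.LSpace F ≃ₗ[F] Module.Dual F (Q.patternAlg F) :=
    (epsEquiv Q F).trans (LinearEquiv.ofBijective (psiMap Q F) (psiMap_bijective Q)) with hEta
  -- the intertwining relation
  have key : ∀ (y : Q.LSpace F) (X : Q.patternAlg F),
      ηE (Q.coadj F g y) X = ηE y (conjAlg Q F g⁻¹ X) := by
    intro y X
    obtain ⟨R, rfl⟩ := Submodule.Quotient.mk_surjective _ y
    rw [coadj_mk]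
    show psiMap Q F (epsEquiv Q F _) X = psiMap Q F (epsEquiv Q F _) (conjAlg Q F g⁻¹ X)
    rw [psiMap_apply, psiMap_apply]
    have h1 : ∀ (X' : Q.patternAlg F) (W : Matrix (Fin d) (Fin d) F),
        pairB X'.val ((epsEquiv Q F (Submodule.Quotient.mk W)).val) =
          Matrix.trace (X'.val * W) := by
      intro X' W
      rw [epsEquiv_mk, pairB_trunc Q X'.2]
      show Matrix.trace (X'.val * Wᵀᵀ) = _
      rw [Matrix.transpose_transpose]
    rw [h1, h1, conjAlg_inv_val]
    set u : Matrix (Fin d) (Fin d) F :=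
      ((g : (Matrix (Fin d) (Fin d) F)ˣ) : Matrix (Fin d) (Fin d) F) with hu
    set v : Matrix (Fin d) (Fin d) F :=
      ((((g : (Matrix (Fin d) (Fin d) F)ˣ))⁻¹ : (Matrix (Fin d) (Fin d) F)ˣ) :
        Matrix (Fin d) (Fin d) F) with hv
    calc Matrix.trace (X.val * (u * R * v)) = Matrix.trace ((X.val * u * R) * v) := by
          rw [mul_assoc, mul_assoc, mul_assoc]
      _ = Matrix.trace (v * (X.val * u * R)) := (Matrix.trace_mul_comm _ _).symm
      _ = Matrix.trace ((v * X.val * u) * R) := by rw [mul_assoc, mul_assoc, mul_assoc]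
  -- fixed points as kernels
  have e1 : MulAction.fixedBy (Q.LSpace F) g ≃ LinearMap.ker C := by
    refine Equiv.subtypeEquivRight fun y => ?_
    rw [MulAction.mem_fixedBy]
    show Q.coadj F g y = y ↔ _
    rw [LinearMap.mem_ker, hC, LinearMap.sub_apply, LinearMap.id_apply, sub_eq_zero]
  have e2 : MulAction.fixedBy (Q.patternAlg F) g ≃ LinearMap.ker A := by
    refine Equiv.subtypeEquivRight fun x => ?_
    rw [MulAction.mem_fixedBy, LinearMap.mem_ker, hA, LinearMap.sub_apply, LinearMap.id_apply,
      sub_eq_zero]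
    rw [Subtype.ext_iff, Subtype.ext_iff, algSMul_val, conjAlg_inv_val]
    exact unit_conj_fix_iff (g : (Matrix (Fin d) (Fin d) F)ˣ) x.val
  -- kernel of the dual map
  have hker : LinearMap.ker (A.dualMap) =
      Submodule.map (ηE : Q.LSpace F →ₗ[F] Module.Dual F (Q.patternAlg F))
        (LinearMap.ker C) := by
    ext φ
    rw [LinearMap.mem_ker, Submodule.mem_map]
    constructor
    · intro hd
      refine ⟨ηE.symm φ, ?_, by simp only [LinearEquiv.coe_coe]; exact ηE.apply_symm_apply φ⟩
      rw [LinearMap.mem_ker, hC, LinearMap.sub_apply, LinearMap.id_apply, sub_eq_zero]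
      apply ηE.injective
      apply LinearMap.ext
      intro X
      have h0 := congrArg (fun (ψ : Module.Dual F (Q.patternAlg F)) => ψ X) hd
      simp only [LinearMap.zero_apply] at h0
      rw [LinearMap.dualMap_apply] at h0
      rw [show φ = ηE (ηE.symm φ) from (ηE.apply_symm_apply φ).symm] at h0
      rw [hA, LinearMap.sub_apply, LinearMap.id_apply, map_sub, sub_eq_zero] at h0
      rw [key (ηE.symm φ) X]
      exact h0
    · rintro ⟨y', hy', rfl⟩
      rw [LinearMap.mem_ker, hC, LinearMap.sub_apply, LinearMap.id_apply, sub_eq_zero] at hy'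
      apply LinearMap.ext
      intro X
      simp only [LinearEquiv.coe_coe, LinearMap.zero_apply, LinearMap.dualMap_apply]
      rw [hA, LinearMap.sub_apply, LinearMap.id_apply, map_sub, ← key y' X, hy', sub_self]
  -- compare cardinalities via `q ^ finrank`
  have hfr1 : Module.finrank F (LinearMap.ker A.dualMap) =
      Module.finrank F (LinearMap.ker C) := by
    rw [hker]
    exact LinearEquiv.finrank_map_eq _ _
  have hfr2 : Module.finrank F (LinearMap.ker A.dualMap) =
      Module.finrank F (LinearMap.ker A) := by
    have r1 := LinearMap.finrank_range_add_finrank_ker A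
    have r2 := LinearMap.finrank_range_add_finrank_ker A.dualMap
    have r3 := LinearMap.finrank_range_dualMap_eq_finrank_range A
    have r4 := Subspace.dual_finrank_eq (K := F) (V := Q.patternAlg F)
    omega
  rw [Nat.card_congr e1, Nat.card_congr e2]
  haveI : Fintype (LinearMap.ker C) := Fintype.ofFinite _
  haveI : Fintype (LinearMap.ker A) := Fintype.ofFinite _
  rw [Nat.card_eq_fintype_card, Nat.card_eq_fintype_card,
    Module.card_eq_pow_finrank (K := F) (V := LinearMap.ker C),
    Module.card_eq_pow_finrank (K := F) (V := LinearMap.ker A), ← hfr1, hfr2]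

/-- Burnside double counting: two actions with matching fixed-point counts have the same
number of orbits. -/
theorem card_orbits_eq_of_fixedBy {G X Y : Type*} [Group G] [Finite G] [MulAction G X]
    [MulAction G Y] [Finite X] [Finite Y]
    (h : ∀ g : G, Nat.card (MulAction.fixedBy X g) = Nat.card (MulAction.fixedBy Y g)) :
    Nat.card (Quotient (MulAction.orbitRel G X)) =
      Nat.card (Quotient (MulAction.orbitRel G Y)) := by
  classical
  haveI : Fintype G := Fintype.ofFinite G
  haveI : Fintype X := Fintype.ofFinite X
  haveI : Fintype Y := Fintype.ofFinite Y
  haveI hfx : ∀ g : G, Fintype (MulAction.fixedBy X g) := fun g => Fintype.ofFinite _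
  haveI hfy : ∀ g : G, Fintype (MulAction.fixedBy Y g) := fun g => Fintype.ofFinite _
  haveI : Fintype (Quotient (MulAction.orbitRel G X)) := Fintype.ofFinite _
  haveI : Fintype (Quotient (MulAction.orbitRel G Y)) := Fintype.ofFinite _
  have b1 := MulAction.sum_card_fixedBy_eq_card_orbits_mul_card_group G X
  have b2 := MulAction.sum_card_fixedBy_eq_card_orbits_mul_card_group G Y
  have hs : ∑ g : G, Fintype.card (MulAction.fixedBy X g) =
      ∑ g : G, Fintype.card (MulAction.fixedBy Y g) := by
    refine Finset.sum_congr rfl fun g _ => ?_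
    have := h g
    rwa [Nat.card_eq_fintype_card, Nat.card_eq_fintype_card] at this
  rw [b1, b2] at hs
  rw [Nat.card_eq_fintype_card, Nat.card_eq_fintype_card]
  exact Nat.eq_of_mul_eq_mul_right Fintype.card_pos hs

theorem kOf_eq_card_orbits_L (Q : PatternPoset d) (F : Type) [Field F] [Fintype F] :
    Q.kOf F = Nat.card (Quotient (MulAction.orbitRel (Q.patternGroup F) (Q.LSpace F))) := by
  rw [kOf_eq_card_orbits_alg]
  exact (card_orbits_eq_of_fixedBy (fun g => card_fixedBy_eq Q F g)).symm

end Duality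


section Deletion

open scoped Classical

variable {n : ℕ} (F : Type) [Field F] (S : PosetSystem (n + 1))

/-- Restriction of a matrix along `succAbove`. -/
noncomputable def resLin (m : Fin (n + 1)) (F : Type) [Field F] :
    Matrix (Fin (n + 1)) (Fin (n + 1)) F →ₗ[F] Matrix (Fin n) (Fin n) F where
  toFun X := X.submatrix m.succAbove m.succAbove
  map_add' X Y := by ext i j; simp [Matrix.submatrix_apply]
  map_smul' c X := by ext i j; simp [Matrix.submatrix_apply]

theorem resLin_apply (m : Fin (n + 1)) (X : Matrix (Fin (n + 1)) (Fin (n + 1)) F)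
    (i j : Fin n) : resLin m F X i j = X (m.succAbove i) (m.succAbove j) := rfl

/-- Extension of a matrix along `succAbove` (zero row and column at `m`). -/
noncomputable def extLin (m : Fin (n + 1)) (F : Type) [Field F] :
    Matrix (Fin n) (Fin n) F →ₗ[F] Matrix (Fin (n + 1)) (Fin (n + 1)) F where
  toFun Y := ∑ i : Fin n, ∑ j : Fin n, single (m.succAbove i) (m.succAbove j) (Y i j)
  map_add' X Y := by
    simp only [Matrix.add_apply, Matrix.single_add, Finset.sum_add_distrib]
  map_smul' c X := by
    ext a b
    simp [Matrix.sum_apply, Matrix.single, Matrix.of_apply, Finset.mul_sum, mul_ite]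

theorem extLin_apply_emb (m : Fin (n + 1)) (Y : Matrix (Fin n) (Fin n) F) (i j : Fin n) :
    extLin m F Y (m.succAbove i) (m.succAbove j) = Y i j := by
  show (∑ i' : Fin n, ∑ j' : Fin n,
      single (m.succAbove i') (m.succAbove j') (Y i' j')) _ _ = Y i j
  rw [Matrix.sum_apply]
  rw [Finset.sum_eq_single i]
  · rw [Matrix.sum_apply, Finset.sum_eq_single j]
    · exact Matrix.single_apply_same _ _ _
    · intro b _ hb
      show (if m.succAbove i = m.succAbove i ∧ m.succAbove b = m.succAbove j
        then Y i b else 0) = 0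
      rw [if_neg]
      rintro ⟨-, hbj⟩
      exact hb (Fin.succAbove_right_injective hbj)
    · intro hj; exact absurd (Finset.mem_univ j) hj
  · intro a _ ha
    rw [Matrix.sum_apply]
    refine Finset.sum_eq_zero fun b _ => ?_
    show (if m.succAbove a = m.succAbove i ∧ m.succAbove b = m.succAbove j
      then Y a b else 0) = 0
    rw [if_neg]
    rintro ⟨hai, -⟩
    exact ha (Fin.succAbove_right_injective hai)
  · intro hi; exact absurd (Finset.mem_univ i) hi

theorem extLin_apply_rowm (m : Fin (n + 1)) (Y : Matrix (Fin n) (Fin n) F) (j : Fin (n + 1)) :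
    extLin m F Y m j = 0 := by
  show (∑ i' : Fin n, ∑ j' : Fin n,
      single (m.succAbove i') (m.succAbove j') (Y i' j')) m j = 0
  rw [Matrix.sum_apply]
  refine Finset.sum_eq_zero fun a _ => ?_
  rw [Matrix.sum_apply]
  refine Finset.sum_eq_zero fun b _ => ?_
  show (if m.succAbove a = m ∧ m.succAbove b = j then Y a b else 0) = 0
  rw [if_neg]
  rintro ⟨ham, -⟩
  exact Fin.succAbove_ne m a ham

theorem extLin_apply_colm (m : Fin (n + 1)) (Y : Matrix (Fin n) (Fin n) F) (i : Fin (n + 1)) :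
    extLin m F Y i m = 0 := by
  show (∑ i' : Fin n, ∑ j' : Fin n,
      single (m.succAbove i') (m.succAbove j') (Y i' j')) i m = 0
  rw [Matrix.sum_apply]
  refine Finset.sum_eq_zero fun a _ => ?_
  rw [Matrix.sum_apply]
  refine Finset.sum_eq_zero fun b _ => ?_
  show (if m.succAbove a = i ∧ m.succAbove b = m then Y a b else 0) = 0
  rw [if_neg]
  rintro ⟨-, hbm⟩
  exact Fin.succAbove_ne m b hbm

theorem resLin_extLin (m : Fin (n + 1)) (Y : Matrix (Fin n) (Fin n) F) :
    resLin m F (extLin m F Y) = Y := by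
  ext i j
  rw [resLin_apply, extLin_apply_emb]

theorem resLin_one (m : Fin (n + 1)) :
    resLin m F (1 : Matrix (Fin (n + 1)) (Fin (n + 1)) F) = 1 := by
  ext i j
  rw [resLin_apply]
  by_cases hij : i = j
  · subst hij; rw [Matrix.one_apply_eq, Matrix.one_apply_eq]
  · rw [Matrix.one_apply_ne (fun hc => hij (Fin.succAbove_right_injective hc)),
      Matrix.one_apply_ne hij]

theorem resLin_mul (m : Fin (n + 1)) {X Y : Matrix (Fin (n + 1)) (Fin (n + 1)) F}
    (hY : ∀ j : Fin n, Y m (m.succAbove j) = 0) :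
    resLin m F (X * Y) = resLin m F X * resLin m F Y := by
  ext i j
  rw [resLin_apply, Matrix.mul_apply, Matrix.mul_apply]
  rw [Fin.sum_univ_succAbove (fun k => X (m.succAbove i) k * Y k (m.succAbove j)) m]
  rw [hY j, mul_zero, zero_add]
  rfl

theorem unit_row_m {u : (Matrix (Fin (n + 1)) (Fin (n + 1)) F)ˣ}
    (hu : ((u : Matrix (Fin (n + 1)) (Fin (n + 1)) F) - 1) ∈ S.P.patternAlg F)
    (k : Fin (n + 1)) :
    (u : Matrix (Fin (n + 1)) (Fin (n + 1)) F) S.m k =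
      (1 : Matrix (Fin (n + 1)) (Fin (n + 1)) F) S.m k := by
  have h := hu S.m k (S.m_max k)
  rwa [Matrix.sub_apply, sub_eq_zero] at h

theorem row_one_mul {A W : Matrix (Fin (n + 1)) (Fin (n + 1)) F}
    (hA : ∀ k, A S.m k = (1 : Matrix (Fin (n + 1)) (Fin (n + 1)) F) S.m k) (b : Fin (n + 1)) :
    (A * W) S.m b = W S.m b := by
  rw [Matrix.mul_apply]
  have hterm : ∀ k, A S.m k * W k b = (if S.m = k then W k b else 0) := by
    intro k
    rw [hA k, Matrix.one_apply]
    by_cases hk : S.m = k <;> simp [hk]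
  simp only [hterm]
  simp [Finset.sum_ite_eq]

/-- The restriction of a pattern-group element to the deleted poset, as a unit. -/
noncomputable def resUnit (g : S.P.patternGroup F) : (Matrix (Fin n) (Fin n) F)ˣ where
  val := resLin S.m F ((g : (Matrix (Fin (n + 1)) (Fin (n + 1)) F)ˣ) :
      Matrix (Fin (n + 1)) (Fin (n + 1)) F)
  inv := resLin S.m F ((((g : (Matrix (Fin (n + 1)) (Fin (n + 1)) F)ˣ))⁻¹ :
      (Matrix (Fin (n + 1)) (Fin (n + 1)) F)ˣ) : Matrix (Fin (n + 1)) (Fin (n + 1)) F)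
  val_inv := by
    rw [← resLin_mul F S.m (fun j => by
      rw [unit_row_m F S (PatternPoset.inv_sub_one_mem g.2) (S.m.succAbove j),
        Matrix.one_apply_ne (Fin.succAbove_ne S.m j).symm])]
    rw [(g : (Matrix (Fin (n + 1)) (Fin (n + 1)) F)ˣ).mul_inv, resLin_one]
  inv_val := by
    rw [← resLin_mul F S.m (fun j => by
      rw [unit_row_m F S g.2 (S.m.succAbove j),
        Matrix.one_apply_ne (Fin.succAbove_ne S.m j).symm])]
    rw [(g : (Matrix (Fin (n + 1)) (Fin (n + 1)) F)ˣ).inv_mul, resLin_one]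

theorem resUnit_val (g : S.P.patternGroup F) :
    ((resUnit F S g : (Matrix (Fin n) (Fin n) F)ˣ) : Matrix (Fin n) (Fin n) F) =
      resLin S.m F ((g : (Matrix (Fin (n + 1)) (Fin (n + 1)) F)ˣ) :
        Matrix (Fin (n + 1)) (Fin (n + 1)) F) := rfl

/-- The restriction of a pattern-group element to the deleted poset. -/
noncomputable def resU (g : S.P.patternGroup F) : (S.P.delete S.m).patternGroup F :=
  ⟨resUnit F S g, by
    intro i j hij
    rw [Matrix.sub_apply, resUnit_val, resLin_apply]
    have h1 : (1 : Matrix (Fin n) (Fin n) F) i j =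
        (1 : Matrix (Fin (n + 1)) (Fin (n + 1)) F) (S.m.succAbove i) (S.m.succAbove j) := by
      by_cases hc : i = j
      · subst hc; rw [Matrix.one_apply_eq, Matrix.one_apply_eq]
      · rw [Matrix.one_apply_ne hc,
          Matrix.one_apply_ne (fun hcc => hc (Fin.succAbove_right_injective hcc))]
    rw [h1, ← Matrix.sub_apply]
    exact g.2 _ _ hij⟩

theorem resU_val (g : S.P.patternGroup F) :
    ((resU F S g : (Matrix (Fin n) (Fin n) F)ˣ) : Matrix (Fin n) (Fin n) F) =
      resLin S.m F ((g : (Matrix (Fin (n + 1)) (Fin (n + 1)) F)ˣ) :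
        Matrix (Fin (n + 1)) (Fin (n + 1)) F) := rfl

theorem resU_inv_val (g : S.P.patternGroup F) :
    ((((resU F S g : (Matrix (Fin n) (Fin n) F)ˣ))⁻¹ : (Matrix (Fin n) (Fin n) F)ˣ) :
        Matrix (Fin n) (Fin n) F) =
      resLin S.m F ((((g : (Matrix (Fin (n + 1)) (Fin (n + 1)) F)ˣ))⁻¹ :
        (Matrix (Fin (n + 1)) (Fin (n + 1)) F)ˣ) : Matrix (Fin (n + 1)) (Fin (n + 1)) F) := rfl

theorem extLin_mem_alg {W : Matrix (Fin n) (Fin n) F}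
    (hW : W ∈ (S.P.delete S.m).patternAlg F) : extLin S.m F W ∈ S.P.patternAlg F := by
  intro i j hij
  by_cases hi : i = S.m
  · subst hi; exact extLin_apply_rowm _ _ _ _
  · by_cases hj : j = S.m
    · subst hj; exact extLin_apply_colm _ _ _ _
    · obtain ⟨i', rfl⟩ := Fin.exists_succAbove_eq hi
      obtain ⟨j', rfl⟩ := Fin.exists_succAbove_eq hj
      rw [extLin_apply_emb]
      exact hW i' j' hij

theorem extLin_mem_lowQuot {W : Matrix (Fin n) (Fin n) F}
    (hW : W ∈ (S.P.delete S.m).lowQuot F) : extLin S.m F W ∈ S.P.lowQuot F := by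
  intro i j hji
  by_cases hi : i = S.m
  · subst hi; exact extLin_apply_rowm _ _ _ _
  · have hj : j ≠ S.m := fun e => S.m_max i (by rw [← e]; exact hji)
    obtain ⟨i', rfl⟩ := Fin.exists_succAbove_eq hi
    obtain ⟨j', rfl⟩ := Fin.exists_succAbove_eq hj
    rw [extLin_apply_emb]
    exact hW i' j' hji

/-- The extension of a pattern-group element of the deleted poset. -/
noncomputable def extU (u : (S.P.delete S.m).patternGroup F) : S.P.patternGroup F :=
  unitOfAlg S.P (extLin_mem_alg F S u.2)

theorem resU_extU (u : (S.P.delete S.m).patternGroup F) : resU F S (extU F S u) = u := by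
  apply Subtype.ext; apply Units.ext
  show resLin S.m F (1 + extLin S.m F (((u : (Matrix (Fin n) (Fin n) F)ˣ) :
    Matrix (Fin n) (Fin n) F) - 1)) = ((u : (Matrix (Fin n) (Fin n) F)ˣ) :
      Matrix (Fin n) (Fin n) F)
  rw [map_add, resLin_one, resLin_extLin]
  abel

/-- The projection `L_P(q) → L_{P-m}(q)`. -/
noncomputable def projD : S.P.LSpace F →ₗ[F] (S.P.delete S.m).LSpace F :=
  Submodule.mapQ _ _ (resLin S.m F) (by
    intro X hX
    simp only [Submodule.mem_comap]
    intro i j hji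
    rw [resLin_apply]
    exact hX _ _ hji)

theorem projD_mk (R : Matrix (Fin (n + 1)) (Fin (n + 1)) F) :
    projD F S (Submodule.Quotient.mk R) = Submodule.Quotient.mk (resLin S.m F R) := rfl

/-- The canonical representative `1_A`. -/
noncomputable def X0 : Matrix (Fin (n + 1)) (Fin (n + 1)) F :=
  ∑ a ∈ S.A, single S.m a (1 : F)

theorem oneA_eq : S.oneA F = Submodule.Quotient.mk (X0 F S) := rfl

theorem X0_row (b : Fin (n + 1)) : X0 F S S.m b = if b ∈ S.A then 1 else 0 := by
  rw [X0, Matrix.sum_apply]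
  have hterm : ∀ a ∈ S.A, single S.m a (1 : F) S.m b = if a = b then 1 else 0 := by
    intro a _
    show (if S.m = S.m ∧ a = b then (1 : F) else 0) = _
    by_cases hab : a = b <;> simp [hab]
  rw [Finset.sum_congr rfl hterm]
  simp [Finset.sum_ite_eq']

theorem X0_off {i : Fin (n + 1)} (hi : i ≠ S.m) (j : Fin (n + 1)) : X0 F S i j = 0 := by
  rw [X0, Matrix.sum_apply]
  refine Finset.sum_eq_zero fun a _ => ?_
  show (if S.m = i ∧ a = j then (1 : F) else 0) = 0
  rw [if_neg]
  rintro ⟨hmi, -⟩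
  exact hi hmi.symm

/-- The canonical representative of a fiber element. -/
noncomputable def rep (Z : Matrix (Fin n) (Fin n) F) : Matrix (Fin (n + 1)) (Fin (n + 1)) F :=
  X0 F S + extLin S.m F Z

theorem rep_row (Z : Matrix (Fin n) (Fin n) F) (l : Fin (n + 1)) :
    rep F S Z S.m l = X0 F S S.m l := by
  rw [rep, Matrix.add_apply, extLin_apply_rowm, add_zero]

theorem resLin_X0 : resLin S.m F (X0 F S) = 0 := by
  ext i j
  rw [resLin_apply, X0_off F S (Fin.succAbove_ne S.m i)]
  rfl

theorem resLin_rep (Z : Matrix (Fin n) (Fin n) F) : resLin S.m F (rep F S Z) = Z := by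
  rw [rep, map_add, resLin_X0, resLin_extLin, zero_add]

theorem conj_rep_row (hS : ∀ a ∈ S.A, ∀ x, ¬ (S.P.lt a x ∧ S.P.lt x S.m))
    (g : S.P.patternGroup F) (Z : Matrix (Fin n) (Fin n) F) {b : Fin (n + 1)}
    (hb : S.P.lt b S.m) :
    (((g : (Matrix (Fin (n + 1)) (Fin (n + 1)) F)ˣ) : Matrix (Fin (n + 1)) (Fin (n + 1)) F) *
      rep F S Z *
      ((((g : (Matrix (Fin (n + 1)) (Fin (n + 1)) F)ˣ))⁻¹ : (Matrix (Fin (n + 1)) (Fin (n + 1)) F)ˣ) :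
        Matrix (Fin (n + 1)) (Fin (n + 1)) F)) S.m b = X0 F S S.m b := by
  rw [mul_assoc, row_one_mul F S (fun k => unit_row_m F S g.2 k)]
  rw [Matrix.mul_apply]
  have h1 : ∀ l, rep F S Z S.m l *
      ((((g : (Matrix (Fin (n + 1)) (Fin (n + 1)) F)ˣ))⁻¹ : (Matrix (Fin (n + 1)) (Fin (n + 1)) F)ˣ) :
        Matrix (Fin (n + 1)) (Fin (n + 1)) F) l b =
      if l ∈ S.A then
        ((((g : (Matrix (Fin (n + 1)) (Fin (n + 1)) F)ˣ))⁻¹ : (Matrix (Fin (n + 1)) (Fin (n + 1)) F)ˣ) :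
          Matrix (Fin (n + 1)) (Fin (n + 1)) F) l b else 0 := by
    intro l
    rw [rep_row, X0_row]
    by_cases hl : l ∈ S.A <;> simp [hl]
  rw [Finset.sum_congr rfl fun l _ => h1 l]
  rw [Finset.sum_ite_mem, Finset.univ_inter]
  have h2 : ∀ a ∈ S.A,
      ((((g : (Matrix (Fin (n + 1)) (Fin (n + 1)) F)ˣ))⁻¹ : (Matrix (Fin (n + 1)) (Fin (n + 1)) F)ˣ) :
        Matrix (Fin (n + 1)) (Fin (n + 1)) F) a b =
        if a = b then (1 : F) else 0 := by
    intro a ha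
    have hnab : ¬ S.P.lt a b := fun hab => hS a ha b ⟨hab, hb⟩
    have := unit_entry_eq_one (PatternPoset.inv_sub_one_mem g.2) hnab
    rw [this, Matrix.one_apply]
  rw [Finset.sum_congr rfl h2, X0_row]
  simp [Finset.sum_ite_eq']

theorem coadjQ_mk (g : S.P.patternGroup F) (R : Matrix (Fin (n + 1)) (Fin (n + 1)) F) :
    S.coadjQ F g (Submodule.Quotient.mk R) =
      Submodule.Quotient.mk
        (((g : (Matrix (Fin (n + 1)) (Fin (n + 1)) F)ˣ) : Matrix (Fin (n + 1)) (Fin (n + 1)) F) * R *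
          ((((g : (Matrix (Fin (n + 1)) (Fin (n + 1)) F)ˣ))⁻¹ : (Matrix (Fin (n + 1)) (Fin (n + 1)) F)ˣ) :
            Matrix (Fin (n + 1)) (Fin (n + 1)) F)) := by
  rw [PosetSystem.coadjQ, Submodule.mapQ_apply]
  rfl

theorem stab_univ (hS : ∀ a ∈ S.A, ∀ x, ¬ (S.P.lt a x ∧ S.P.lt x S.m)) :
    S.stab F = Set.univ := by
  ext g
  simp only [Set.mem_univ, iff_true]
  show S.coadjQ F g (S.oneA F) = S.oneA F
  rw [oneA_eq, coadjQ_mk, Submodule.Quotient.eq]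
  intro i j hji
  obtain ⟨hi, hj⟩ := hji
  subst hi
  rw [Matrix.sub_apply, sub_eq_zero]
  have h0 : X0 F S = rep F S (0 : Matrix (Fin n) (Fin n) F) := by rw [rep, map_zero, add_zero]
  conv_lhs => rw [h0]
  exact conj_rep_row F S hS g 0 hj

theorem projL_mk (R : Matrix (Fin (n + 1)) (Fin (n + 1)) F) :
    S.P.projL S.m F (Submodule.Quotient.mk R) = Submodule.Quotient.mk R := by
  rw [PatternPoset.projL, Submodule.mapQ_apply]
  rfl

theorem rep_mem_fiber (Z : Matrix (Fin n) (Fin n) F) :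
    (Submodule.Quotient.mk (rep F S Z) : S.P.LSpace F) ∈ S.fiber F := by
  show S.P.projL S.m F _ = S.oneA F
  rw [projL_mk, oneA_eq, Submodule.Quotient.eq]
  intro i j hji
  obtain ⟨hi, -⟩ := hji
  subst hi
  simp [rep, Matrix.sub_apply, Matrix.add_apply, extLin_apply_rowm]

theorem fiber_lift_row {R : Matrix (Fin (n + 1)) (Fin (n + 1)) F}
    (hR : (Submodule.Quotient.mk R : S.P.LSpace F) ∈ S.fiber F) {b : Fin (n + 1)}
    (hb : S.P.lt b S.m) : R S.m b = X0 F S S.m b := by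
  have h : S.P.projL S.m F (Submodule.Quotient.mk R) = S.oneA F := hR
  rw [projL_mk, oneA_eq, Submodule.Quotient.eq] at h
  have h2 := h S.m b ⟨rfl, hb⟩
  rwa [Matrix.sub_apply, sub_eq_zero] at h2

theorem fiber_eq_rep {R : Matrix (Fin (n + 1)) (Fin (n + 1)) F}
    (hR : (Submodule.Quotient.mk R : S.P.LSpace F) ∈ S.fiber F) :
    (Submodule.Quotient.mk R : S.P.LSpace F) =
      Submodule.Quotient.mk (rep F S (resLin S.m F R)) := by
  rw [Submodule.Quotient.eq]
  intro i j hji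
  by_cases hi : i = S.m
  · subst hi
    rw [Matrix.sub_apply, rep_row, sub_eq_zero]
    exact fiber_lift_row F S hR hji
  · have hj : j ≠ S.m := fun e => S.m_max i (by rw [← e]; exact hji)
    obtain ⟨i', rfl⟩ := Fin.exists_succAbove_eq hi
    obtain ⟨j', rfl⟩ := Fin.exists_succAbove_eq hj
    rw [Matrix.sub_apply, rep, Matrix.add_apply, extLin_apply_emb, resLin_apply,
      X0_off F S (Fin.succAbove_ne S.m i')]
    simp

theorem projD_inj_fiber {X Y : S.P.LSpace F} (hX : X ∈ S.fiber F) (hY : Y ∈ S.fiber F)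
    (hproj : projD F S X = projD F S Y) : X = Y := by
  obtain ⟨R, rfl⟩ := Submodule.Quotient.mk_surjective _ X
  obtain ⟨T, rfl⟩ := Submodule.Quotient.mk_surjective _ Y
  rw [projD_mk, projD_mk, Submodule.Quotient.eq] at hproj
  rw [fiber_eq_rep F S hX, fiber_eq_rep F S hY, Submodule.Quotient.eq]
  have hdiff : rep F S (resLin S.m F R) - rep F S (resLin S.m F T) =
      extLin S.m F (resLin S.m F R - resLin S.m F T) := by
    rw [rep, rep, map_sub]
    abel
  rw [hdiff]
  exact extLin_mem_lowQuot F S hproj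

theorem fiber_smul (hS : ∀ a ∈ S.A, ∀ x, ¬ (S.P.lt a x ∧ S.P.lt x S.m))
    {X : S.P.LSpace F} (hX : X ∈ S.fiber F) (g : S.P.patternGroup F) :
    S.P.coadj F g X ∈ S.fiber F := by
  obtain ⟨R, rfl⟩ := Submodule.Quotient.mk_surjective _ X
  rw [fiber_eq_rep F S hX, coadj_mk]
  show S.P.projL S.m F _ = S.oneA F
  rw [projL_mk, oneA_eq, Submodule.Quotient.eq]
  intro i j hji
  obtain ⟨hi, hj⟩ := hji
  subst hi
  rw [Matrix.sub_apply, sub_eq_zero]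
  exact conj_rep_row F S hS g _ hj

theorem proj_coadj_rep (hS : ∀ a ∈ S.A, ∀ x, ¬ (S.P.lt a x ∧ S.P.lt x S.m))
    (g : S.P.patternGroup F) (Z : Matrix (Fin n) (Fin n) F) :
    projD F S (S.P.coadj F g (Submodule.Quotient.mk (rep F S Z))) =
      (S.P.delete S.m).coadj F (resU F S g) (Submodule.Quotient.mk Z) := by
  rw [coadj_mk, projD_mk, coadj_mk, resU_val F S g, resU_inv_val F S g, Submodule.Quotient.eq]
  have hA : resLin S.m F
      (((g : (Matrix (Fin (n + 1)) (Fin (n + 1)) F)ˣ) : Matrix (Fin (n + 1)) (Fin (n + 1)) F) *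
        extLin S.m F Z *
        ((((g : (Matrix (Fin (n + 1)) (Fin (n + 1)) F)ˣ))⁻¹ : (Matrix (Fin (n + 1)) (Fin (n + 1)) F)ˣ) :
          Matrix (Fin (n + 1)) (Fin (n + 1)) F)) =
      resLin S.m F ((g : (Matrix (Fin (n + 1)) (Fin (n + 1)) F)ˣ) :
        Matrix (Fin (n + 1)) (Fin (n + 1)) F) * Z *
        resLin S.m F ((((g : (Matrix (Fin (n + 1)) (Fin (n + 1)) F)ˣ))⁻¹ :
          (Matrix (Fin (n + 1)) (Fin (n + 1)) F)ˣ) : Matrix (Fin (n + 1)) (Fin (n + 1)) F) := by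
    rw [resLin_mul F S.m (fun j => by
      rw [unit_row_m F S (PatternPoset.inv_sub_one_mem g.2) (S.m.succAbove j),
        Matrix.one_apply_ne (Fin.succAbove_ne S.m j).symm])]
    rw [resLin_mul F S.m (fun j => extLin_apply_rowm F S.m Z (S.m.succAbove j))]
    rw [resLin_extLin]
  have hB : resLin S.m F
      (((g : (Matrix (Fin (n + 1)) (Fin (n + 1)) F)ˣ) : Matrix (Fin (n + 1)) (Fin (n + 1)) F) *
        X0 F S *
        ((((g : (Matrix (Fin (n + 1)) (Fin (n + 1)) F)ˣ))⁻¹ : (Matrix (Fin (n + 1)) (Fin (n + 1)) F)ˣ) :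
          Matrix (Fin (n + 1)) (Fin (n + 1)) F)) ∈ (S.P.delete S.m).lowQuot F := by
    intro i j hji
    rw [resLin_apply]
    refine PatternPoset.conj_entry_zero g.2 (PatternPoset.inv_sub_one_mem g.2) _ _ ?_
    intro k l hik hlj
    by_cases hk0 : X0 F S k l = 0
    · exact hk0
    exfalso
    have hkm : k = S.m := by
      by_contra hkm
      exact hk0 (X0_off F S hkm l)
    subst hkm
    have hlA : l ∈ S.A := by
      by_contra hlA
      apply hk0
      rw [X0_row, if_neg hlA]
    have him : S.P.lt (S.m.succAbove i) S.m := by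
      rcases hik with hik | hik
      · exact absurd hik (Fin.succAbove_ne S.m i)
      · exact hik
    have hlt : S.P.lt l (S.m.succAbove i) := by
      rcases hlj with rfl | hlj
      · exact hji
      · exact S.P.lt_trans hlj hji
    exact hS l hlA (S.m.succAbove i) ⟨hlt, him⟩
  have hsplit : ((g : (Matrix (Fin (n + 1)) (Fin (n + 1)) F)ˣ) :
      Matrix (Fin (n + 1)) (Fin (n + 1)) F) * rep F S Z *
      ((((g : (Matrix (Fin (n + 1)) (Fin (n + 1)) F)ˣ))⁻¹ : (Matrix (Fin (n + 1)) (Fin (n + 1)) F)ˣ) :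
        Matrix (Fin (n + 1)) (Fin (n + 1)) F) =
      ((g : (Matrix (Fin (n + 1)) (Fin (n + 1)) F)ˣ) : Matrix (Fin (n + 1)) (Fin (n + 1)) F) *
        X0 F S *
        ((((g : (Matrix (Fin (n + 1)) (Fin (n + 1)) F)ˣ))⁻¹ : (Matrix (Fin (n + 1)) (Fin (n + 1)) F)ˣ) :
          Matrix (Fin (n + 1)) (Fin (n + 1)) F) +
      ((g : (Matrix (Fin (n + 1)) (Fin (n + 1)) F)ˣ) : Matrix (Fin (n + 1)) (Fin (n + 1)) F) *
        extLin S.m F Z *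
        ((((g : (Matrix (Fin (n + 1)) (Fin (n + 1)) F)ˣ))⁻¹ : (Matrix (Fin (n + 1)) (Fin (n + 1)) F)ˣ) :
          Matrix (Fin (n + 1)) (Fin (n + 1)) F) := by
    rw [rep]
    noncomm_ring
  rw [hsplit, map_add, hA, add_sub_cancel_right]
  exact hB

theorem proj_coadj_fiber (hS : ∀ a ∈ S.A, ∀ x, ¬ (S.P.lt a x ∧ S.P.lt x S.m))
    {X : S.P.LSpace F} (hX : X ∈ S.fiber F) (g : S.P.patternGroup F) :
    projD F S (S.P.coadj F g X) =
      (S.P.delete S.m).coadj F (resU F S g) (projD F S X) := by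
  obtain ⟨R, rfl⟩ := Submodule.Quotient.mk_surjective _ X
  rw [fiber_eq_rep F S hX]
  rw [proj_coadj_rep F S hS g (resLin S.m F R)]
  rw [projD_mk, resLin_rep]

theorem image_orbit (hS : ∀ a ∈ S.A, ∀ x, ¬ (S.P.lt a x ∧ S.P.lt x S.m))
    {X : S.P.LSpace F} (hX : X ∈ S.fiber F) :
    projD F S '' (MulAction.orbit (S.P.patternGroup F) X) =
      MulAction.orbit ((S.P.delete S.m).patternGroup F) (projD F S X) := by
  ext W
  constructor
  · rintro ⟨Y, hY, rfl⟩
    obtain ⟨g, rfl⟩ := MulAction.mem_orbit_iff.mp hY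
    rw [MulAction.mem_orbit_iff]
    refine ⟨resU F S g, ?_⟩
    show (S.P.delete S.m).coadj F (resU F S g) (projD F S X) = projD F S (S.P.coadj F g X)
    exact (proj_coadj_fiber F S hS hX g).symm
  · intro hW
    obtain ⟨u, rfl⟩ := MulAction.mem_orbit_iff.mp hW
    refine ⟨S.P.coadj F (extU F S u) X, MulAction.mem_orbit X (extU F S u), ?_⟩
    show projD F S (S.P.coadj F (extU F S u) X) = (S.P.delete S.m).coadj F u (projD F S X)
    rw [proj_coadj_fiber F S hS hX, resU_extU F S u]

theorem final_count (hS : ∀ a ∈ S.A, ∀ x, ¬ (S.P.lt a x ∧ S.P.lt x S.m)) [Fintype F] :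
    S.systemK F = (S.P.delete S.m).kOf F := by
  classical
  rw [kOf_eq_card_orbits_L]
  show Nat.card {O : Set (S.P.LSpace F) // ∃ X ∈ S.fiber F,
      O = {Y | ∃ g ∈ S.stab F, S.P.coadj F g X = Y}} = _
  apply Nat.card_congr
  have hstab := stab_univ F S hS
  have horb : ∀ X : S.P.LSpace F, {Y | ∃ g ∈ S.stab F, S.P.coadj F g X = Y} =
      MulAction.orbit (S.P.patternGroup F) X := by
    intro X
    ext Y
    simp only [Set.mem_setOf_eq, hstab, Set.mem_univ, true_and]
    rw [MulAction.mem_orbit_iff]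
    exact Iff.rfl
  refine Equiv.trans (Equiv.subtypeEquivRight (q := fun O =>
    ∃ X ∈ S.fiber F, O = MulAction.orbit (S.P.patternGroup F) X) fun O => ?_) ?_
  · show (∃ X ∈ S.fiber F, O = {Y | ∃ g ∈ S.stab F, S.P.coadj F g X = Y}) ↔
      (∃ X ∈ S.fiber F, O = MulAction.orbit (S.P.patternGroup F) X)
    exact exists_congr fun X => and_congr_right fun _ => by rw [horb X]
  refine Equiv.trans (Equiv.ofBijective (fun O =>
    (⟨projD F S '' O.1, by
      obtain ⟨X, hX, hO⟩ := O.2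
      exact ⟨projD F S X, by rw [hO, image_orbit F S hS hX]⟩⟩ :
      {O : Set ((S.P.delete S.m).LSpace F) //
        ∃ Z, O = MulAction.orbit ((S.P.delete S.m).patternGroup F) Z})) ⟨?_, ?_⟩)
    (orbitSetEquiv _ _).symm
  · rintro ⟨O1, hO1⟩ ⟨O2, hO2⟩ hEq
    obtain ⟨X1, hX1, rfl⟩ := hO1
    obtain ⟨X2, hX2, rfl⟩ := hO2
    apply Subtype.ext
    simp only [Subtype.mk.injEq] at hEq
    rw [image_orbit F S hS hX1, image_orbit F S hS hX2] at hEq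
    have hmem : projD F S X2 ∈
        MulAction.orbit ((S.P.delete S.m).patternGroup F) (projD F S X1) := by
      rw [hEq]; exact MulAction.mem_orbit_self _
    obtain ⟨u, hu⟩ := MulAction.mem_orbit_iff.mp hmem
    have hproj : projD F S (S.P.coadj F (extU F S u) X1) = projD F S X2 := by
      rw [proj_coadj_fiber F S hS hX1, resU_extU F S u]
      exact hu
    have hXX : S.P.coadj F (extU F S u) X1 = X2 :=
      projD_inj_fiber F S (fiber_smul F S hS hX1 _) hX2 hproj
    show MulAction.orbit _ X1 = MulAction.orbit _ X2
    rw [← hXX]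
    exact (MulAction.orbit_smul (extU F S u) X1).symm
  · rintro ⟨O, Z, rfl⟩
    obtain ⟨W, rfl⟩ := Submodule.Quotient.mk_surjective _ Z
    refine ⟨⟨MulAction.orbit (S.P.patternGroup F) (Submodule.Quotient.mk (rep F S W)),
      Submodule.Quotient.mk (rep F S W), rep_mem_fiber F S W, rfl⟩, ?_⟩
    apply Subtype.ext
    show projD F S '' _ = _
    rw [image_orbit F S hS (rep_mem_fiber F S W), projD_mk, resLin_rep]

end Deletion


end PakAux
/-- **Lemma 4.4**: if no pair `(a, x) ∈ A × P` satisfies `a ≺ x ≺ m`, then the poset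
system `(P, m, A)` reduces to `P − m`: `k(P, m, A; q) = k(P − m; q)`. -/
theorem systemK_eq_kOf_delete (n : ℕ) (S : PosetSystem (n + 1))
    (h : ∀ a ∈ S.A, ∀ x, ¬ (S.P.lt a x ∧ S.P.lt x S.m))
    (F : Type) [Field F] [Fintype F] (hq : IsPrimePow (Fintype.card F)) :
    S.systemK F = (S.P.delete S.m).kOf F := by
  exact PakAux.final_count F S h
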